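/- For the near-group fusion ring C_4 + 1 (rank 5, basis 1, g, g², g³, x with g of order 4, g·x = x, x² = 1 + g + g² + g³ + x), the formal codegrees are (17+√17)/2, (17-√17)/2, and 4 with multiplicity 3, and ((17+√17)/2)/4 = (17+√17)/8 is not an algebraic integer. -/

import Mathlib

open Polynomial Matrix

set_option maxHeartbeats 4000000 in
private theorem det_fin_five'' (M : Matrix (Fin 5) (Fin 5) (Polynomial ℝ)) : M.det =
    M 0 0 * (M 1 1 * (M 2 2 * (M 3 3 * (M 4 4) - M 3 4 * (M 4 3)) - M 2 3 * (M 3 2 * (M 4 4) - M 3 4 * (M 4 2)) + M 2 4 * (M 3 2 * (M 4 3) - M 3 3 * (M 4 2))) - M 1 2 * (M 2 1 * (M 3 3 * (M 4 4) - M 3 4 * (M 4 3)) - M 2 3 * (M 3 1 * (M 4 4) - M 3 4 * (M 4 1)) + M 2 4 * (M 3 1 * (M 4 3) - M 3 3 * (M 4 1))) + M 1 3 * (M 2 1 * (M 3 2 * (M 4 4) - M 3 4 * (M 4 2)) - M 2 2 * (M 3 1 * (M 4 4) - M 3 4 * (M 4 1)) + M 2 4 * (M 3 1 * (M 4 2)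 - M 3 2 * (M 4 1))) - M 1 4 * (M 2 1 * (M 3 2 * (M 4 3) - M 3 3 * (M 4 2)) - M 2 2 * (M 3 1 * (M 4 3) - M 3 3 * (M 4 1)) + M 2 3 * (M 3 1 * (M 4 2) - M 3 2 * (M 4 1)))) - M 0 1 * (M 1 0 * (M 2 2 * (M 3 3 * (M 4 4) - M 3 4 * (M 4 3)) - M 2 3 * (M 3 2 * (M 4 4) - M 3 4 * (M 4 2)) + M 2 4 * (M 3 2 * (M 4 3) - M 3 3 * (M 4 2))) - M 1 2 * (M 2 0 * (M 3 3 * (M 4 4) - M 3 4 * (M 4 3)) - M 2 3 * (M 3 0 * (M 4 4) - M 3 4 * (M 4 0)) + M 2 4 * (M 3 0 * (M 4 3) - M 3 3 * (M 4 0))) + M 1 3 * (M 2 0 * (M 3 2 * (M 4 4) - M 3 4 * (M 4 2)) - M 2 2 * (M 3 0 * (M 4 4) - M 3 4 * (M 4 0)) + M 2 4 * (M 3 0 * (M 4 2) - M 3 2 * (M 4 0))) - M 1 4 * (M 2 0 * (M 3 2 * (M 4 3) - M 3 3 * (M 4 2)) - M 2 2 * (M 3 0 * (M 4 3) - M 3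 3 * (M 4 0)) + M 2 3 * (M 3 0 * (M 4 2) - M 3 2 * (M 4 0)))) + M 0 2 * (M 1 0 * (M 2 1 * (M 3 3 * (M 4 4) - M 3 4 * (M 4 3)) - M 2 3 * (M 3 1 * (M 4 4) - M 3 4 * (M 4 1)) + M 2 4 * (M 3 1 * (M 4 3) - M 3 3 * (M 4 1))) - M 1 1 * (M 2 0 * (M 3 3 * (M 4 4) - M 3 4 * (M 4 3)) - M 2 3 * (M 3 0 * (M 4 4) - M 3 4 * (M 4 0)) + M 2 4 * (M 3 0 * (M 4 3) - M 3 3 * (M 4 0))) + M 1 3 * (M 2 0 * (M 3 1 * (M 4 4) - M 3 4 * (M 4 1)) - M 2 1 * (M 3 0 * (M 4 4) - M 3 4 * (M 4 0)) + M 2 4 * (M 3 0 * (M 4 1) - M 3 1 * (M 4 0))) - M 1 4 * (M 2 0 * (M 3 1 * (M 4 3) - M 3 3 * (M 4 1)) - M 2 1 * (M 3 0 * (M 4 3) - M 3 3 * (M 4 0)) + M 2 3 * (M 3 0 * (M 4 1) - M 3 1 * (M 4 0)))) - M 0 3 * (M 1 0 * (M 2 1 * (M 3 2 * (M 4 4)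 - M 3 4 * (M 4 2)) - M 2 2 * (M 3 1 * (M 4 4) - M 3 4 * (M 4 1)) + M 2 4 * (M 3 1 * (M 4 2) - M 3 2 * (M 4 1))) - M 1 1 * (M 2 0 * (M 3 2 * (M 4 4) - M 3 4 * (M 4 2)) - M 2 2 * (M 3 0 * (M 4 4) - M 3 4 * (M 4 0)) + M 2 4 * (M 3 0 * (M 4 2) - M 3 2 * (M 4 0))) + M 1 2 * (M 2 0 * (M 3 1 * (M 4 4) - M 3 4 * (M 4 1)) - M 2 1 * (M 3 0 * (M 4 4) - M 3 4 * (M 4 0)) + M 2 4 * (M 3 0 * (M 4 1) - M 3 1 * (M 4 0))) - M 1 4 * (M 2 0 * (M 3 1 * (M 4 2) - M 3 2 * (M 4 1)) - M 2 1 * (M 3 0 * (M 4 2) - M 3 2 * (M 4 0)) + M 2 2 * (M 3 0 * (M 4 1) - M 3 1 * (M 4 0)))) + M 0 4 * (M 1 0 * (M 2 1 * (M 3 2 * (M 4 3) - M 3 3 * (M 4 2)) - M 2 2 * (M 3 1 * (M 4 3) - M 3 3 * (M 4 1)) + M 2 3 * (M 3 1 * (M 4 2) - M 3 2 * (M 4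 1))) - M 1 1 * (M 2 0 * (M 3 2 * (M 4 3) - M 3 3 * (M 4 2)) - M 2 2 * (M 3 0 * (M 4 3) - M 3 3 * (M 4 0)) + M 2 3 * (M 3 0 * (M 4 2) - M 3 2 * (M 4 0))) + M 1 2 * (M 2 0 * (M 3 1 * (M 4 3) - M 3 3 * (M 4 1)) - M 2 1 * (M 3 0 * (M 4 3) - M 3 3 * (M 4 0)) + M 2 3 * (M 3 0 * (M 4 1) - M 3 1 * (M 4 0))) - M 1 3 * (M 2 0 * (M 3 1 * (M 4 2) - M 3 2 * (M 4 1)) - M 2 1 * (M 3 0 * (M 4 2) - M 3 2 * (M 4 0)) + M 2 2 * (M 3 0 * (M 4 1) - M 3 1 * (M 4 0)))) := by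
  have h1 : (Fin.succ 2 : Fin 5) = 3 := rfl
  have h2 : (Fin.castSucc 2 : Fin 5) = 2 := rfl
  have h3 : (Fin.succ 3 : Fin 5) = 4 := rfl
  have h4 : (Fin.castSucc 3 : Fin 5) = 3 := rfl
  have h5 : ((2:Fin 3).succ.succ : Fin 5) = 4 := rfl
  have h6 : ((2:Fin 3).castSucc.castSucc : Fin 5) = 2 := rfl
  have h7 : ((2:Fin 3).succ.castSucc : Fin 5) = 3 := rfl
  have h8 : ((2:Fin 3).castSucc.succ : Fin 5) = 3 := rfl
  simp [Matrix.det_succ_row_zero, Fin.sum_univ_succ]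
  simp [Fin.succAbove, Fin.lt_def, Fin.ext_iff]
  ring

private theorem charpoly_aux :
    (!![5,1,1,1,1;1,5,1,1,1;1,1,5,1,1;1,1,1,5,1;1,1,1,1,9] : Matrix (Fin 5) (Fin 5) ℝ).charpoly
      = (X ^ 2 - 17 * X + 68) * (X - 4) ^ 3 := by
  rw [Matrix.charpoly]
  have h : charmatrix (!![5,1,1,1,1;1,5,1,1,1;1,1,5,1,1;1,1,1,5,1;1,1,1,1,9] : Matrix (Fin 5) (Fin 5) ℝ)
      = !![X-5,-1,-1,-1,-1; -1,X-5,-1,-1,-1; -1,-1,X-5,-1,-1; -1,-1,-1,X-5,-1; -1,-1,-1,-1,X-9] := by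
    ext i j
    fin_cases i <;> fin_cases j <;>
      simp [charmatrix_apply_eq, charmatrix_apply_ne, map_ofNat] <;>
      norm_num [Matrix.vecHead, Matrix.vecTail]
  rw [h, det_fin_five'']
  norm_num [Matrix.cons_val_zero, Matrix.cons_val_one, Matrix.cons_val_two,
    Matrix.cons_val_three, Matrix.cons_val_four, Matrix.head_cons, Matrix.vecHead,
    Matrix.vecTail, Function.comp]
  ring

private theorem not_int_aux : ¬ IsIntegral ℤ ((17 + Real.sqrt 17) / 8) := by
  intro h
  set α : ℝ := (17 + Real.sqrt 17) / 8 with hα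
  have hs : Real.sqrt 17 ^ 2 = 17 := Real.sq_sqrt (by norm_num)
  have hirr : Irrational (Real.sqrt 17) := by
    have := Nat.Prime.irrational_sqrt (p := 17) (by norm_num)
    simpa using this
  have hirrα : Irrational α := by
    rintro ⟨q, hq⟩
    apply hirr
    refine ⟨8 * q - 17, ?_⟩
    push_cast
    rw [hq, hα]; ring
  have hq0 : aeval α (X ^ 2 - C (17/4 : ℚ) * X + C (17/4 : ℚ)) = 0 := by
    simp only [map_add, map_sub, _root_.map_mul, map_pow, aeval_X, aeval_C]
    have : (algebraMap ℚ ℝ) (17/4 : ℚ) = (17/4 : ℝ) := by norm_num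
    rw [this, hα]
    field_simp
    nlinarith [hs]
  have hqm : (X ^ 2 - C (17/4 : ℚ) * X + C (17/4 : ℚ)).Monic := by
    monicity!
  have halg : IsIntegral ℚ α := ⟨_, hqm, hq0⟩
  have hdvd := minpoly.dvd ℚ α hq0
  have hndq : (X ^ 2 - C (17/4 : ℚ) * X + C (17/4 : ℚ)).natDegree = 2 := by
    compute_degree!
  have hne : minpoly ℚ α ≠ 0 := minpoly.ne_zero halg
  have hd2 : (minpoly ℚ α).natDegree = 2 := by
    have hle : (minpoly ℚ α).natDegree ≤ 2 := by
      have := Polynomial.natDegree_le_of_dvd hdvd hqm.ne_zero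
      rwa [hndq] at this
    have h0 : (minpoly ℚ α).natDegree ≠ 0 := (minpoly.natDegree_pos halg).ne'
    have h1 : (minpoly ℚ α).natDegree ≠ 1 := by
      intro h1
      have : (minpoly ℚ α).degree = 1 := by
        rw [show (1 : WithBot ℕ) = ((1 : ℕ) : WithBot ℕ) from rfl,
          degree_eq_iff_natDegree_eq hne]; exact h1
      obtain ⟨q, hq⟩ := (minpoly.degree_eq_one_iff).mp this
      exact hirrα ⟨q, hq⟩
    omega
  have hmin : X ^ 2 - C (17/4 : ℚ) * X + C (17/4 : ℚ) = minpoly ℚ α :=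
    Polynomial.eq_of_monic_of_dvd_of_natDegree_le (minpoly.monic halg) hqm hdvd
      (by rw [hndq, hd2])
  have hmap : minpoly ℚ α = (minpoly ℤ α).map (algebraMap ℤ ℚ) :=
    minpoly.isIntegrallyClosed_eq_field_fractions' ℚ h
  have hc1 : (minpoly ℚ α).coeff 1 = -(17/4 : ℚ) := by
    rw [← hmin]
    simp [coeff_X_pow, coeff_C]
  rw [hmap, coeff_map] at hc1
  set n : ℤ := (minpoly ℤ α).coeff 1
  have : (n : ℚ) = -(17/4) := hc1
  have h4 : ((4 * n : ℤ) : ℚ) = (-17 : ℤ) := by push_cast; rw [this]; ring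
  have := Int.cast_injective (α := ℚ) h4
  omega

set_option maxHeartbeats 4000000 in
/-- For the near-group fusion ring C₄ + 1 (basis 1, g, g², g³, x), the formal
codegrees are (17±√17)/2 and 4 with multiplicity 3 (i.e. the characteristic
polynomial of A = Σᵢ Xᵢ Xᵢᵀ is (x² - 17x + 68)(x - 4)³), and
((17+√17)/2)/4 = (17+√17)/8 is not an algebraic integer. -/
theorem nearGroup_C4_plus_1_codegrees :
    let X₁ : Matrix (Fin 5) (Fin 5) ℝ := 1
    let Xg : Matrix (Fin 5) (Fin 5) ℝ :=
      !![0,0,0,1,0; 1,0,0,0,0; 0,1,0,0,0; 0,0,1,0,0; 0,0,0,0,1]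
    let Xg2 : Matrix (Fin 5) (Fin 5) ℝ :=
      !![0,0,1,0,0; 0,0,0,1,0; 1,0,0,0,0; 0,1,0,0,0; 0,0,0,0,1]
    let Xg3 : Matrix (Fin 5) (Fin 5) ℝ :=
      !![0,1,0,0,0; 0,0,1,0,0; 0,0,0,1,0; 1,0,0,0,0; 0,0,0,0,1]
    let Xx : Matrix (Fin 5) (Fin 5) ℝ :=
      !![0,0,0,0,1; 0,0,0,0,1; 0,0,0,0,1; 0,0,0,0,1; 1,1,1,1,1]
    let A := X₁ * X₁ᵀ + Xg * Xgᵀ + Xg2 * Xg2ᵀ + Xg3 * Xg3ᵀ + Xx * Xxᵀ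
    A.charpoly = (X ^ 2 - 17 * X + 68) * (X - 4) ^ 3 ∧
      ((17 + Real.sqrt 17) / 2) / 4 = (17 + Real.sqrt 17) / 8 ∧
      ¬ IsIntegral ℤ ((17 + Real.sqrt 17) / 8) := by
  intro X₁ Xg Xg2 Xg3 Xx A
  refine ⟨?_, by ring, not_int_aux⟩
  have hA : A = !![5,1,1,1,1;1,5,1,1,1;1,1,5,1,1;1,1,1,5,1;1,1,1,1,9] := by
    show X₁ * X₁ᵀ + Xg * Xgᵀ + Xg2 * Xg2ᵀ + Xg3 * Xg3ᵀ + Xx * Xxᵀ = _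
    ext i j
    fin_cases i <;> fin_cases j <;>
      norm_num [X₁, Xg, Xg2, Xg3, Xx, Matrix.mul_apply, Fin.sum_univ_five,
        Matrix.one_apply, Matrix.transpose_apply, Matrix.cons_val_zero, Matrix.cons_val_one,
        Matrix.cons_val_two, Matrix.cons_val_three, Matrix.cons_val_four, Matrix.head_cons,
        Matrix.vecHead, Matrix.vecTail, Function.comp, Fin.ext_iff, Matrix.vecMul, dotProduct]
  rw [hA, charpoly_aux]
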